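/- Let G be a finite group with |G| = n and S ⊆ G with |S| = k ≥ 1. Then the covering number τ(S,G) satisfies τ(S,G) ≤ (n/k)·H_k, where H_k = ∑_{j=1}^k 1/j is the k-th harmonic number. In particular τ(S,G) ≤ (n/k)(log k + 1). -/

import Mathlib

open Pointwise

/-- The covering number `τ(S,G)`: the minimal size of a set `T ⊆ G` with `T·S = G`. -/
noncomputable def covNum (G : Type*) [Group G] [Fintype G] [DecidableEq G]
    (S : Finset G) : ℕ :=
  sInf {m | ∃ T : Finset G, T.card = m ∧ T * S = Finset.univ}

/-- `ceilMul n k j = ⌈j*k/n⌉` (as a natural number, for `j ≥ 1`). -/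
def ceilMul (n k j : ℕ) : ℕ := (j * k - 1) / n + 1

lemma ceilMul_pos (n k j : ℕ) : 1 ≤ ceilMul n k j := Nat.le_add_left 1 _

lemma ceilMul_char {n : ℕ} (hn : 0 < n) (k j : ℕ) : j * k ≤ n * ceilMul n k j := by
  have h := Nat.lt_mul_div_succ (j * k - 1) hn
  unfold ceilMul
  omega

lemma ceilMul_le {n k j c : ℕ} (hn : 0 < n) (hj : 1 ≤ j) (hk : 1 ≤ k)
    (h : j * k ≤ c * n) : ceilMul n k j ≤ c := by
  have h1 : 1 ≤ j * k := Nat.one_le_iff_ne_zero.mpr (by positivity)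
  have h2 : j * k - 1 < c * n := by omega
  exact Nat.succ_le_of_lt ((Nat.div_lt_iff_lt_mul hn).mpr h2)

lemma ceilMul_mono (n k : ℕ) {j j' : ℕ} (h : j ≤ j') : ceilMul n k j ≤ ceilMul n k j' := by
  unfold ceilMul
  have : j * k ≤ j' * k := Nat.mul_le_mul_right k h
  exact Nat.add_le_add_right (Nat.div_le_div_right (by omega)) 1

/-- Averaging: some translate `t • S` covers at least `|U|·|S|/|G|` elements of `U`. -/
lemma exists_good_translate {G : Type*} [Group G] [Fintype G] [DecidableEq G]
    (S U : Finset G) :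
    ∃ t : G, U.card * S.card ≤ Fintype.card G * ((t • S) ∩ U).card := by
  have key : ∑ t : G, ((t • S) ∩ U).card = U.card * S.card := by
    have h1 : ∀ t : G, ((t • S) ∩ U).card = ∑ x ∈ U, if x ∈ t • S then 1 else 0 := by
      intro t
      rw [Finset.inter_comm, ← Finset.filter_mem_eq_inter, Finset.card_filter]
    calc ∑ t : G, ((t • S) ∩ U).card
        = ∑ t : G, ∑ x ∈ U, if x ∈ t • S then 1 else 0 := by
          exact Finset.sum_congr rfl fun t _ => h1 t
      _ = ∑ x ∈ U, ∑ t : G, if x ∈ t • S then 1 else 0 := Finset.sum_comm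
      _ = ∑ x ∈ U, S.card := by
          refine Finset.sum_congr rfl fun x _ => ?_
          rw [← Finset.card_filter]
          have himg : Finset.filter (fun t : G => x ∈ t • S) Finset.univ
              = S.image (fun s => x * s⁻¹) := by
            ext t
            simp only [Finset.mem_filter, Finset.mem_univ, true_and, Finset.mem_image,
              Finset.mem_smul_finset, smul_eq_mul]
            constructor
            · rintro ⟨y, hy, hxy⟩
              exact ⟨y, hy, by rw [← hxy]; group⟩
            · rintro ⟨y, hy, hxy⟩
              exact ⟨y, hy, by rw [← hxy]; group⟩
          rw [himg, Finset.card_image_of_injective]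
          intro a b hab
          simpa using hab
      _ = U.card * S.card := by rw [Finset.sum_const, smul_eq_mul]
  by_contra hcon
  push_neg at hcon
  have hne : (Finset.univ : Finset G).Nonempty := Finset.univ_nonempty
  have hlt : ∑ t : G, Fintype.card G * ((t • S) ∩ U).card
      < ∑ _t : G, U.card * S.card :=
    Finset.sum_lt_sum_of_nonempty hne fun t _ => hcon t
  rw [← Finset.mul_sum, key, Finset.sum_const, smul_eq_mul, Finset.card_univ] at hlt
  exact lt_irrefl _ hlt

/-- Greedy covering: any `U` can be covered by `T` with
`|T| ≤ ∑_{j=1}^{|U|} 1/⌈jk/n⌉`. -/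
lemma greedy_cover {G : Type*} [Group G] [Fintype G] [DecidableEq G]
    (S : Finset G) (n k : ℕ) (hn : Fintype.card G = n) (hk : S.card = k) (hk1 : 1 ≤ k) :
    ∀ u : ℕ, ∀ U : Finset G, U.card = u →
      ∃ T : Finset G, U ⊆ T * S ∧
        (T.card : ℝ) ≤ ∑ j ∈ Finset.Ioc 0 u, (1 : ℝ) / (ceilMul n k j) := by
  have hn1 : 0 < n := hn ▸ Fintype.card_pos
  intro u
  induction u using Nat.strong_induction_on with
  | _ u ih =>
    intro U hU
    rcases Nat.eq_zero_or_pos u with hu0 | hu1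
    · subst hu0
      refine ⟨∅, ?_, by simp⟩
      rw [Finset.card_eq_zero.mp hU]
      exact Finset.empty_subset _
    · obtain ⟨t, ht⟩ := exists_good_translate S U
      set c := ((t • S) ∩ U).card with hc
      rw [hU, hk, hn] at ht
      have hc1 : 1 ≤ c := by
        rcases Nat.eq_zero_or_pos c with h0 | h1
        · exfalso; rw [h0, mul_zero] at ht
          have : 1 ≤ u * k := Nat.one_le_iff_ne_zero.mpr (by positivity)
          omega
        · exact h1
      have hcu : c ≤ u := by
        rw [hc, ← hU]; exact Finset.card_le_card (Finset.inter_subset_right)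
      set U' := U \ (t • S) with hU'
      have hU'card : U'.card = u - c := by
        have h2 := Finset.card_inter_add_card_sdiff U (t • S)
        rw [Finset.inter_comm] at h2
        rw [hU']
        omega
      obtain ⟨T', hT'sub, hT'card⟩ := ih (u - c) (by omega) U' hU'card
      refine ⟨insert t T', ?_, ?_⟩
      · intro x hx
        by_cases hxt : x ∈ t • S
        · obtain ⟨s, hs, hts⟩ := Finset.mem_smul_finset.mp hxt
          exact Finset.mem_mul.mpr ⟨t, Finset.mem_insert_self t T', s, hs, hts⟩
        · have : x ∈ U' := Finset.mem_sdiff.mpr ⟨hx, hxt⟩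
          exact Finset.mul_subset_mul_right (Finset.subset_insert t T') (hT'sub this)
      · have hcard : ((insert t T').card : ℝ) ≤ (T'.card : ℝ) + 1 := by
          exact_mod_cast Finset.card_insert_le t T'
        have hsplit : ∑ j ∈ Finset.Ioc 0 (u - c), (1 : ℝ) / (ceilMul n k j)
            + ∑ j ∈ Finset.Ioc (u - c) u, (1 : ℝ) / (ceilMul n k j)
            = ∑ j ∈ Finset.Ioc 0 u, (1 : ℝ) / (ceilMul n k j) :=
          Finset.sum_Ioc_consecutive _ (by omega) (by omega)
        have htail : (1 : ℝ) ≤ ∑ j ∈ Finset.Ioc (u - c) u, (1 : ℝ) / (ceilMul n k j) := by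
          have hmu : ceilMul n k u ≤ c := ceilMul_le hn1 hu1 hk1 (by linarith [ht, Nat.mul_comm n c])
          have hterm : ∀ j ∈ Finset.Ioc (u - c) u, (1 : ℝ) / c ≤ 1 / (ceilMul n k j) := by
            intro j hj
            rw [Finset.mem_Ioc] at hj
            have h1 : ceilMul n k j ≤ c := le_trans (ceilMul_mono n k hj.2) hmu
            have h2 : (0 : ℝ) < (ceilMul n k j : ℝ) := by
              exact_mod_cast Nat.lt_of_lt_of_le Nat.zero_lt_one (ceilMul_pos n k j)
            apply one_div_le_one_div_of_le h2
            exact_mod_cast h1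
          calc (1 : ℝ) = (Finset.Ioc (u - c) u).card * (1 / c) := by
                rw [Nat.card_Ioc]
                have : u - (u - c) = c := by omega
                rw [this]
                field_simp
            _ ≤ ∑ j ∈ Finset.Ioc (u - c) u, (1 : ℝ) / (ceilMul n k j) := by
                have h3 := Finset.card_nsmul_le_sum (Finset.Ioc (u - c) u) _ _ hterm
                simpa [nsmul_eq_mul] using h3
        calc ((insert t T').card : ℝ) ≤ (T'.card : ℝ) + 1 := hcard
          _ ≤ (∑ j ∈ Finset.Ioc 0 (u - c), (1 : ℝ) / (ceilMul n k j)) + 1 := by linarith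
          _ ≤ (∑ j ∈ Finset.Ioc 0 (u - c), (1 : ℝ) / (ceilMul n k j))
              + ∑ j ∈ Finset.Ioc (u - c) u, (1 : ℝ) / (ceilMul n k j) := by linarith
          _ = ∑ j ∈ Finset.Ioc 0 u, (1 : ℝ) / (ceilMul n k j) := hsplit

/-- Telescoping sum of differences of reciprocals. -/
lemma tele_sum (a : ℕ) (ha : 1 ≤ a) :
    ∀ b : ℕ, a ≤ b →
      ∑ i ∈ Finset.Ico a b, ((1 : ℝ) / i - 1 / (i + 1)) = 1 / a - 1 / b := by
  intro b
  induction b with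
  | zero => intro h; omega
  | succ b ihb =>
    intro hab
    rcases Nat.lt_or_ge a (b + 1) with h | h
    · have hab' : a ≤ b := by omega
      rw [Finset.sum_Ico_succ_top hab', ihb hab']
      push_cast
      ring
    · have : a = b + 1 := by omega
      subst this
      simp
  
/-- The key arithmetic bound: `∑_{j=1}^n 1/⌈jk/n⌉ ≤ (n/k)·H_k`. -/
lemma sum_ceil_bound (n k : ℕ) (hn : 1 ≤ n) (hk : 1 ≤ k) :
    ∑ j ∈ Finset.Ioc 0 n, (1 : ℝ) / (ceilMul n k j)
      ≤ ((n : ℝ) / k) * ∑ j ∈ Finset.range k, (1 : ℝ) / (j + 1) := by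
  have hn0 : (0 : ℝ) < n := by exact_mod_cast hn
  have hk0 : (0 : ℝ) < k := by exact_mod_cast hk
  -- rewrite each term using the telescoping sum
  have hterm : ∀ j ∈ Finset.Ioc 0 n, (1 : ℝ) / (ceilMul n k j)
      = 1 / k + ∑ i ∈ Finset.Ico (ceilMul n k j) k, ((1 : ℝ) / i - 1 / (i + 1)) := by
    intro j hj
    rw [Finset.mem_Ioc] at hj
    have hmk : ceilMul n k j ≤ k := ceilMul_le (by omega) hj.1 hk
      (by calc j * k ≤ n * k := Nat.mul_le_mul_right k hj.2
            _ = k * n := Nat.mul_comm n k)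
    rw [tele_sum (ceilMul n k j) (ceilMul_pos n k j) k hmk]
    ring
  rw [Finset.sum_congr rfl hterm, Finset.sum_add_distrib]
  -- first part: ∑ 1/k = n/k
  have hpart1 : ∑ _j ∈ Finset.Ioc 0 n, (1 : ℝ) / k = n / k := by
    rw [Finset.sum_const, Nat.card_Ioc, nsmul_eq_mul]
    simp
    ring
  -- second part: swap sums
  have hswap : ∑ j ∈ Finset.Ioc 0 n, ∑ i ∈ Finset.Ico (ceilMul n k j) k,
        ((1 : ℝ) / i - 1 / (i + 1))
      = ∑ i ∈ Finset.Ico 1 k, ∑ j ∈ Finset.Ioc 0 n,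
        (if ceilMul n k j ≤ i then ((1 : ℝ) / i - 1 / (i + 1)) else 0) := by
    rw [← Finset.sum_comm]
    refine Finset.sum_congr rfl fun j hj => ?_
    have h1 : Finset.Ico (ceilMul n k j) k
        = Finset.filter (fun i => ceilMul n k j ≤ i) (Finset.Ico 1 k) := by
      ext i
      simp only [Finset.mem_Ico, Finset.mem_filter]
      have := ceilMul_pos n k j
      omega
    rw [h1, Finset.sum_filter]
  rw [hpart1, hswap]
  -- bound each inner sum
  have hinner : ∀ i ∈ Finset.Ico 1 k, ∑ j ∈ Finset.Ioc 0 n,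
        (if ceilMul n k j ≤ i then ((1 : ℝ) / i - 1 / (i + 1)) else 0)
      ≤ ((i : ℝ) * n / k) * ((1 : ℝ) / i - 1 / (i + 1)) := by
    intro i hi
    rw [Finset.mem_Ico] at hi
    have hi0 : (0 : ℝ) < i := by exact_mod_cast hi.1
    have hpos : (0 : ℝ) ≤ (1 : ℝ) / i - 1 / (i + 1) := by
      rw [sub_nonneg]
      apply one_div_le_one_div_of_le hi0
      linarith
    have hfil : Finset.filter (fun j => ceilMul n k j ≤ i) (Finset.Ioc 0 n)
        ⊆ Finset.Ioc 0 (i * n / k) := by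
      intro j hj
      rw [Finset.mem_filter, Finset.mem_Ioc] at hj
      rw [Finset.mem_Ioc]
      refine ⟨hj.1.1, ?_⟩
      rw [Nat.le_div_iff_mul_le (by omega)]
      calc j * k ≤ n * ceilMul n k j := ceilMul_char (by omega) k j
        _ ≤ n * i := Nat.mul_le_mul_left n hj.2
        _ = i * n := Nat.mul_comm n i
    calc ∑ j ∈ Finset.Ioc 0 n, (if ceilMul n k j ≤ i then ((1 : ℝ) / i - 1 / (i + 1)) else 0)
        = ((Finset.filter (fun j => ceilMul n k j ≤ i) (Finset.Ioc 0 n)).card : ℝ)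
            * ((1 : ℝ) / i - 1 / (i + 1)) := by
          rw [← Finset.sum_filter, Finset.sum_const, nsmul_eq_mul]
      _ ≤ ((i * n / k : ℕ) : ℝ) * ((1 : ℝ) / i - 1 / (i + 1)) := by
          apply mul_le_mul_of_nonneg_right _ hpos
          have hcard : (Finset.filter (fun j => ceilMul n k j ≤ i) (Finset.Ioc 0 n)).card
              ≤ i * n / k := by simpa using Finset.card_le_card hfil
          exact_mod_cast hcard
      _ ≤ ((i : ℝ) * n / k) * ((1 : ℝ) / i - 1 / (i + 1)) := by
          apply mul_le_mul_of_nonneg_right _ hpos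
          calc ((i * n / k : ℕ) : ℝ) ≤ ((i * n : ℕ) : ℝ) / k := Nat.cast_div_le
            _ = (i : ℝ) * n / k := by push_cast; ring
  have hfinal : (n : ℝ) / k + ∑ i ∈ Finset.Ico 1 k, ((i : ℝ) * n / k) * ((1 : ℝ) / i - 1 / (i + 1))
      = ((n : ℝ) / k) * ∑ j ∈ Finset.range k, (1 : ℝ) / (j + 1) := by
    have hsimp : ∀ i ∈ Finset.Ico 1 k, ((i : ℝ) * n / k) * ((1 : ℝ) / i - 1 / (i + 1))
        = ((n : ℝ) / k) * (1 / (i + 1)) := by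
      intro i hi
      rw [Finset.mem_Ico] at hi
      have hi0 : (0 : ℝ) < i := by exact_mod_cast hi.1
      field_simp
      ring
    rw [Finset.sum_congr rfl hsimp, ← Finset.mul_sum]
    rw [Finset.range_eq_Ico, Finset.sum_eq_sum_Ico_succ_bot (by omega : 0 < k)]
    push_cast
    ring
  calc (n : ℝ) / k + ∑ i ∈ Finset.Ico 1 k, ∑ j ∈ Finset.Ioc 0 n,
        (if ceilMul n k j ≤ i then ((1 : ℝ) / i - 1 / (i + 1)) else 0)
      ≤ (n : ℝ) / k + ∑ i ∈ Finset.Ico 1 k, ((i : ℝ) * n / k) * ((1 : ℝ) / i - 1 / (i + 1)) := by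
        exact add_le_add_right (Finset.sum_le_sum hinner) _
    _ = ((n : ℝ) / k) * ∑ j ∈ Finset.range k, (1 : ℝ) / (j + 1) := hfinal

theorem covering_number_harmonic_bound {G : Type*} [Group G] [Fintype G] [DecidableEq G]
    (S : Finset G) (n k : ℕ) (hn : Fintype.card G = n) (hk : S.card = k) (hk1 : 1 ≤ k) :
    (covNum G S : ℝ) ≤ ((n : ℝ) / k) * ∑ j ∈ Finset.range k, (1 : ℝ) / (j + 1) ∧
    (covNum G S : ℝ) ≤ ((n : ℝ) / k) * (Real.log k + 1) := by
  have hn1 : 1 ≤ n := hn ▸ Fintype.card_pos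
  obtain ⟨T, hTsub, hTcard⟩ := greedy_cover S n k hn hk hk1 n Finset.univ (by rw [Finset.card_univ, hn])
  have hTS : T * S = Finset.univ := Finset.univ_subset_iff.mp hTsub
  have hcov : covNum G S ≤ T.card := Nat.sInf_le ⟨T, rfl, hTS⟩
  have h1 : (covNum G S : ℝ) ≤ ((n : ℝ) / k) * ∑ j ∈ Finset.range k, (1 : ℝ) / (j + 1) := by
    calc (covNum G S : ℝ) ≤ (T.card : ℝ) := by exact_mod_cast hcov
      _ ≤ ∑ j ∈ Finset.Ioc 0 n, (1 : ℝ) / (ceilMul n k j) := hTcard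
      _ ≤ ((n : ℝ) / k) * ∑ j ∈ Finset.range k, (1 : ℝ) / (j + 1) := sum_ceil_bound n k hn1 hk1
  refine ⟨h1, h1.trans ?_⟩
  have hhk : ∑ j ∈ Finset.range k, (1 : ℝ) / (j + 1) = ((harmonic k : ℚ) : ℝ) := by
    rw [harmonic]
    push_cast
    refine Finset.sum_congr rfl fun j _ => ?_
    rw [one_div]
  have hlog : ∑ j ∈ Finset.range k, (1 : ℝ) / (j + 1) ≤ Real.log k + 1 := by
    rw [hhk]
    have := harmonic_le_one_add_log k
    linarith
  apply mul_le_mul_of_nonneg_left hlog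
  positivity
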